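/- Let g be a unitary automorphism of a hermitian space (V, h) over (E, σ) of dimension d, and write its characteristic polynomial as det(T·id − g) = T^d + b₁ T^{d−1} + … + b_d (with b₀ = 1). Then b_d ≠ 0, σ(b_d)·b_d = 1, and σ(b_d)·b_i = σ(b_{d−i}) for all 0 ≤ i ≤ d; equivalently, the characteristic polynomial P of g satisfies P = P*, where P*(T) = σ(b_d)^{−1} T^d P^σ(T^{−1}) and P^σ applies σ to the coefficients of P. -/

import Mathlib

/-- `P*`: for monic `P` with nonzero constant term `b_d`, `P*(T) = σ(b_d)⁻¹ T^d P^σ(T⁻¹)`. -/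
noncomputable def pstar {k : Type*} [Field k] (σ : k →+* k) (P : Polynomial k) : Polynomial k :=
  Polynomial.C (σ (P.coeff 0))⁻¹ * (P.map σ).reverse

open Polynomial Matrix in
set_option maxHeartbeats 1000000 in
/-- Let `g` be a unitary automorphism of a `d`-dimensional hermitian space `(V,h)`
over `(E,σ)` with characteristic polynomial `T^d + b₁T^{d−1} + … + b_d` (so `b_i` is the
coefficient of `T^{d−i}`). Then `b_d ≠ 0`, `σ(b_d)·b_d = 1`, `σ(b_d)·b_i = σ(b_{d−i})` for
`0 ≤ i ≤ d`; equivalently `P = P*`. -/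
theorem stmt8 {E : Type*} [Field E] (σ : E →+* E) (hσ : ∀ x, σ (σ x) = x)
    {V : Type*} [AddCommGroup V] [Module E V] [FiniteDimensional E V]
    (d : ℕ) (hd : Module.finrank E V = d)
    (h : V →ₗ[E] V →ₛₗ[σ] E)
    (h_herm : ∀ x y : V, h y x = σ (h x y))
    (h_nondeg : ∀ x : V, (∀ y : V, h x y = 0) → x = 0)
    (g : V ≃ₗ[E] V) (hg : ∀ x y : V, h (g x) (g y) = h x y) :
    (LinearMap.charpoly g.toLinearMap).coeff 0 ≠ 0 ∧
    σ ((LinearMap.charpoly g.toLinearMap).coeff 0)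
      * (LinearMap.charpoly g.toLinearMap).coeff 0 = 1 ∧
    (∀ i ≤ d, σ ((LinearMap.charpoly g.toLinearMap).coeff 0)
        * (LinearMap.charpoly g.toLinearMap).coeff (d - i)
      = σ ((LinearMap.charpoly g.toLinearMap).coeff i)) ∧
    LinearMap.charpoly g.toLinearMap = pstar σ (LinearMap.charpoly g.toLinearMap) := by
  classical
  set f := g.toLinearMap with hfdef
  let b : Module.Basis (Fin d) E V := Module.finBasisOfFinrankEq E V hd
  set A : Matrix (Fin d) (Fin d) E := LinearMap.toMatrix b b f with hA
  set H : Matrix (Fin d) (Fin d) E := Matrix.of (fun i j => h (b i) (b j)) with hHdef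
  -- expansions of h
  have hsum2 : ∀ (x : V) (w : Fin d → E),
      h x (∑ j, w j • b j) = ∑ j, σ (w j) * h x (b j) := by
    intro x w
    rw [map_sum]
    simp [smul_eq_mul]
  have hsum1 : ∀ (v : Fin d → E) (y : V),
      h (∑ i, v i • b i) y = ∑ i, v i * h (b i) y := by
    intro v y
    rw [map_sum, LinearMap.sum_apply]
    simp [smul_eq_mul]
  have hfb : ∀ i, f (b i) = ∑ k, A k i • b k := by
    intro i
    rw [hA]
    conv_lhs => rw [← b.sum_repr (f (b i))]
    simp [LinearMap.toMatrix_apply]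
  -- the key matrix identity
  have key : Aᵀ * H * A.map σ = H := by
    ext i j
    have hthis : h (f (b i)) (f (b j)) = H i j := hg (b i) (b j)
    rw [hfb i, hfb j, hsum1] at hthis
    calc (Aᵀ * H * A.map σ) i j
        = ∑ l, (∑ k, A k i * H k l) * σ (A l j) := by
          simp [Matrix.mul_apply, Matrix.transpose_apply, Matrix.map_apply]
      _ = ∑ l, ∑ k, A k i * H k l * σ (A l j) := by
          refine Finset.sum_congr rfl fun l _ => ?_
          rw [Finset.sum_mul]
      _ = ∑ k, ∑ l, A k i * H k l * σ (A l j) := Finset.sum_comm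
      _ = ∑ k, A k i * ∑ l, σ (A l j) * H k l := by
          refine Finset.sum_congr rfl fun k _ => ?_
          rw [Finset.mul_sum]
          exact Finset.sum_congr rfl fun l _ => by ring
      _ = ∑ k, A k i * h (b k) (∑ l, A l j • b l) := by
          refine Finset.sum_congr rfl fun k _ => ?_
          rw [hsum2]
          rfl
      _ = H i j := hthis
  -- H has nonzero determinant
  have hHdet : H.det ≠ 0 := by
    intro h0
    have h0t : Hᵀ.det = 0 := by rwa [Matrix.det_transpose]
    obtain ⟨v, hv0, hvm⟩ := (Matrix.exists_mulVec_eq_zero_iff).mpr h0t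
    have hz : ∀ j, h (∑ i, v i • b i) (b j) = 0 := by
      intro j
      rw [hsum1]
      have := congrFun hvm j
      simpa [Matrix.mulVec, dotProduct, Matrix.transpose_apply, mul_comm, hHdef, Matrix.of_apply] using this
    have hx : (∑ i, v i • b i) = 0 := by
      apply h_nondeg
      intro y
      conv_lhs => rw [← b.sum_repr y]
      rw [hsum2]
      refine Finset.sum_eq_zero fun j _ => ?_
      rw [hz j, mul_zero]
    have := Fintype.linearIndependent_iff.mp b.linearIndependent v hx
    exact hv0 (funext this)
  -- pass to polynomial matrices
  set P : Polynomial E := LinearMap.charpoly f with hPdef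
  have hPA : A.charpoly = P := LinearMap.charpoly_toMatrix f b
  set c : E := P.coeff 0 with hcdef
  have hPm : P.Monic := hPA ▸ A.charpoly_monic
  have hPd : P.natDegree = d := by
    rw [← hPA, Matrix.charpoly_natDegree_eq_dim, Fintype.card_fin]
  set Cm : Matrix (Fin d) (Fin d) E →+* Matrix (Fin d) (Fin d) E[X] :=
    (Polynomial.C (R := E)).mapMatrix with hCm
  have keyX : Cm Aᵀ * Cm H * Cm (A.map σ) = Cm H := by
    rw [← _root_.map_mul Cm, ← _root_.map_mul Cm, key]
  have hscal : (Matrix.scalar (Fin d) (X : E[X]))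
      = (Polynomial.X : Polynomial E) • (1 : Matrix (Fin d) (Fin d) (Polynomial E)) := by
    ext i j
    by_cases hij : i = j <;>
      simp [Matrix.scalar_apply, Matrix.diagonal_apply, hij, Matrix.one_apply, Matrix.smul_apply]
  -- main determinant identity (matrix level)
  have mainL : Cm Aᵀ * Cm H * charmatrix (A.map σ) = ((X : E[X]) • Cm Aᵀ - 1) * Cm H := by
    have hcm : charmatrix (A.map σ)
        = (X : E[X]) • (1 : Matrix (Fin d) (Fin d) E[X]) - Cm (A.map σ) := by
      rw [charmatrix, hscal]
    rw [hcm, mul_sub, mul_smul_comm, mul_one, keyX, sub_mul, smul_mul_assoc, one_mul]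
  -- take determinants
  have mainD : Polynomial.C A.det * (P.map σ) * Polynomial.C H.det
      = ((X : E[X]) • Cm Aᵀ - 1).det * Polynomial.C H.det := by
    have e1 := congrArg Matrix.det mainL
    rw [Matrix.det_mul, Matrix.det_mul, Matrix.det_mul] at e1
    have e2 : (Cm Aᵀ).det = Polynomial.C A.det := by
      rw [hCm, ← RingHom.map_det, Matrix.det_transpose]
    have e3 : (Cm H).det = Polynomial.C H.det := by
      rw [hCm, ← RingHom.map_det]
    have e4 : (charmatrix (A.map σ)).det = P.map σ := by
      change (A.map σ).charpoly = P.map σ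
      rw [Matrix.charpoly_map, hPA]
    rw [e2, e3, e4] at e1
    calc Polynomial.C A.det * (P.map σ) * Polynomial.C H.det
        = Polynomial.C A.det * Polynomial.C H.det * (P.map σ) := by ring
      _ = ((X : E[X]) • Cm Aᵀ - 1).det * Polynomial.C H.det := e1
  have mainD' : Polynomial.C A.det * (P.map σ) = ((X : E[X]) • Cm Aᵀ - 1).det := by
    have hCH : (Polynomial.C H.det : E[X]) ≠ 0 := by
      simpa using hHdet
    exact mul_right_cancel₀ hCH mainD
  -- compute the right-hand determinant as a reverse charpoly
  have hrev : ((X : E[X]) • Cm Aᵀ - 1 : Matrix (Fin d) (Fin d) E[X]).det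
      = (-1 : E[X]) ^ d * P.reverse := by
    have ht : ((X : E[X]) • Cm Aᵀ - 1 : Matrix (Fin d) (Fin d) E[X])
        = ((X : E[X]) • Cm A - 1 : Matrix (Fin d) (Fin d) E[X])ᵀ := by
      rw [Matrix.transpose_sub, Matrix.transpose_smul, Matrix.transpose_one,
        hCm, RingHom.mapMatrix_apply, RingHom.mapMatrix_apply, Matrix.transpose_map]
    rw [ht, Matrix.det_transpose]
    have : ((X : E[X]) • Cm A - 1 : Matrix (Fin d) (Fin d) E[X])
        = -(1 - (X : E[X]) • Cm A) := (neg_sub _ _).symm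
    rw [this, Matrix.det_neg, Fintype.card_fin]
    congr 1
    rw [← hPA, Matrix.reverse_charpoly]
    rfl
  -- relate det A to the constant coefficient
  have hdetA : A.det = (-1 : E) ^ d * c := by
    rw [Matrix.det_eq_sign_charpoly_coeff, Fintype.card_fin, hPA, hcdef]
  -- the master identity
  have star : P.map σ * Polynomial.C c = P.reverse := by
    have : ((-1 : E[X]) ^ d) * (Polynomial.C c * P.map σ)
        = ((-1 : E[X]) ^ d) * P.reverse := by
      rw [← mul_assoc, ← hrev, ← mainD', hdetA]
      simp only [_root_.map_mul, _root_.map_pow, _root_.map_neg, _root_.map_one]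
    have hne : ((-1 : E[X]) ^ d) ≠ 0 := by
      apply pow_ne_zero
      exact neg_ne_zero.mpr one_ne_zero
    have := mul_left_cancel₀ hne this
    rw [← this]; ring
  -- conclusion 2 (from which conclusion 1 follows)
  have hσcc : σ c * c = 1 := by
    have := congrArg (fun q : E[X] => q.coeff 0) star
    simpa [Polynomial.coeff_mul_C, Polynomial.coeff_map, Polynomial.coeff_zero_reverse,
      hPm.leadingCoeff] using this
  have hc0 : c ≠ 0 := by
    intro hc
    rw [hc, mul_zero] at hσcc
    exact zero_ne_one hσcc
  have hσc0 : σ c ≠ 0 := by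
    intro hc
    rw [hc, zero_mul] at hσcc
    exact zero_ne_one hσcc
  refine ⟨hc0, hσcc, ?_, ?_⟩
  · -- conclusion 3
    intro i hi
    have hco := congrArg (fun q : E[X] => q.coeff i) star
    simp only [Polynomial.coeff_mul_C, Polynomial.coeff_map, Polynomial.coeff_reverse,
      hPd, Polynomial.revAt_le hi] at hco
    calc σ c * P.coeff (d - i) = σ c * (σ (P.coeff i) * c) := by rw [hco]
      _ = σ (P.coeff i) * (σ c * c) := by ring
      _ = σ (P.coeff i) := by rw [hσcc, mul_one]
  · -- conclusion 4
    have hmapσσ : (P.map σ).map σ = P := by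
      rw [Polynomial.map_map]
      have : σ.comp σ = RingHom.id E := RingHom.ext hσ
      rw [this, Polynomial.map_id]
    have hrevmap : (P.reverse).map σ = (P.map σ).reverse := by
      unfold Polynomial.reverse
      rw [Polynomial.reflect_map]
      congr 2
      exact (Polynomial.natDegree_map σ (p := P)).symm
    have star2 : P * Polynomial.C (σ c) = (P.map σ).reverse := by
      have := congrArg (Polynomial.map σ) star
      rw [Polynomial.map_mul, Polynomial.map_C, hmapσσ, hrevmap] at this
      exact this
    have hfin : Polynomial.C ((σ c)⁻¹) * (P * Polynomial.C (σ c)) = P := by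
      rw [mul_comm P, ← mul_assoc, ← Polynomial.C_mul, inv_mul_cancel₀ hσc0,
        Polynomial.C_1, one_mul]
    rw [pstar, ← star2]
    exact hfin.symm
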